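/- Let H be a complex Hilbert space and let A, B ∈ B(H) be positive and invertible. Then for every C ∈ B(H), (A⁻¹ + B⁻¹)⁻¹ ≤ C*AC + (1 − C)*B(1 − C), and equality holds if and only if C = (A + B)⁻¹B. -/

import Mathlib

/-- Lemma 6.7: for positive definite `A` and `B`, the parallel sum
`A : B = (A⁻¹ + B⁻¹)⁻¹` satisfies `A : B ≤ C*AC + (1 − C)*B(1 − C)` for every `C`, and
equality holds iff `C = (A + B)⁻¹ B`. -/
theorem parallel_sum_le_and_eq_iff
    {H : Type*} [NormedAddCommGroup H] [InnerProductSpace ℂ H] [CompleteSpace H]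
    (A B : H →L[ℂ] H) (hA : A.IsPositive) (hB : B.IsPositive)
    (hAu : IsUnit A) (hBu : IsUnit B) :
    ∀ C : H →L[ℂ] H,
      Ring.inverse (Ring.inverse A + Ring.inverse B) ≤
        star C * A * C + star (1 - C) * B * (1 - C) ∧
      (Ring.inverse (Ring.inverse A + Ring.inverse B) =
          star C * A * C + star (1 - C) * B * (1 - C) ↔
        C = Ring.inverse (A + B) * B) := by
  intro C
  have hA0 : (0 : H →L[ℂ] H) ≤ A := (ContinuousLinearMap.nonneg_iff_isPositive A).mpr hA
  have hB0 : (0 : H →L[ℂ] H) ≤ B := (ContinuousLinearMap.nonneg_iff_isPositive B).mpr hB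
  set S : H →L[ℂ] H := A + B with hSdef
  have hS0 : (0 : H →L[ℂ] H) ≤ S := add_nonneg hA0 hB0
  have hSu : IsUnit S := CStarAlgebra.isUnit_of_le A (le_add_of_nonneg_right hB0) ⟨hA0, hAu⟩
  set iA := Ring.inverse A with hiAdef
  set iB := Ring.inverse B with hiBdef
  set iS := Ring.inverse S with hiSdef
  have hAiA : A * iA = 1 := Ring.mul_inverse_cancel A hAu
  have hiAA : iA * A = 1 := Ring.inverse_mul_cancel A hAu
  have hBiB : B * iB = 1 := Ring.mul_inverse_cancel B hBu
  have hiBB : iB * B = 1 := Ring.inverse_mul_cancel B hBu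
  have hSiS : S * iS = 1 := Ring.mul_inverse_cancel S hSu
  have hiSS : iS * S = 1 := Ring.inverse_mul_cancel S hSu
  -- self-adjointness
  have hAsa : star A = A := hA.isSelfAdjoint.star_eq
  have hBsa : star B = B := hB.isSelfAdjoint.star_eq
  have hSsa : star S = S := by rw [hSdef, star_add, hAsa, hBsa]
  have hiSsa : star iS = iS := by
    calc star iS = star iS * (S * iS) := by rw [hSiS, mul_one]
      _ = star iS * star S * iS := by rw [hSsa, mul_assoc]
      _ = star (S * iS) * iS := by rw [star_mul]
      _ = iS := by rw [hSiS, star_one, one_mul]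
  -- invertibility of iA + iB and formula for its inverse
  have hfac : iA + iB = iB * (S * iA) := by
    rw [hSdef, add_mul, mul_add, hAiA, mul_one, ← mul_assoc, hiBB, one_mul, add_comm]
  have hKu : IsUnit (iA + iB) := by
    rw [hfac]; exact hBu.ringInverse.mul (hSu.mul hAu.ringInverse)
  have hmul : (iA + iB) * (A * (iS * B)) = 1 := by
    have h2 : iB * (A * (iS * B)) = 1 - iS * B := by
      have hA' : A = S - B := by rw [hSdef]; abel
      rw [hA', sub_mul, mul_sub, ← mul_assoc S iS B, hSiS, one_mul, hiBB,
        ← mul_assoc iB B, hiBB, one_mul]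
    rw [add_mul, ← mul_assoc iA A, hiAA, one_mul, h2]
    abel
  have hP : Ring.inverse (iA + iB) = A * (iS * B) := by
    calc Ring.inverse (iA + iB)
        = Ring.inverse (iA + iB) * ((iA + iB) * (A * (iS * B))) := by rw [hmul, mul_one]
      _ = (Ring.inverse (iA + iB) * (iA + iB)) * (A * (iS * B)) := by rw [mul_assoc]
      _ = A * (iS * B) := by rw [Ring.inverse_mul_cancel _ hKu, one_mul]
  -- the key identity
  set D : H →L[ℂ] H := C - iS * B with hDdef
  have hDstar : star D = star C - B * iS := by
    rw [hDdef, star_sub, star_mul, hBsa, hiSsa]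
  have key : star C * A * C + star (1 - C) * B * (1 - C)
      = A * (iS * B) + star D * S * D := by
    have hA' : A = S - B := by rw [hSdef]; abel
    rw [hDstar, hDdef, star_sub, star_one]
    rw [show A = S - B from hA']
    simp only [sub_mul, mul_sub, mul_one, one_mul, mul_assoc]
    rw [← mul_assoc iS S, hiSS, one_mul, ← mul_assoc S iS, hSiS, one_mul]
    abel
  have hconj : (0 : H →L[ℂ] H) ≤ star D * S * D := star_left_conjugate_nonneg hS0 D
  constructor
  · rw [key, hP]
    exact le_add_of_nonneg_right hconj
  · constructor
    · intro heq
      have hzero : star D * S * D = 0 := by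
        have h' : A * (iS * B) + star D * S * D = A * (iS * B) + 0 := by
          rw [add_zero, ← key, ← hP]; exact heq.symm
        exact add_left_cancel h'
      -- use the square root of S
      set_option synthInstance.maxHeartbeats 1000000 in
      have hrr : CFC.sqrt S * CFC.sqrt S = S := CFC.sqrt_mul_sqrt_self S hS0
      set r := CFC.sqrt S with hrdef
      have hrsa : star r = r := (IsSelfAdjoint.of_nonneg (CFC.sqrt_nonneg S)).star_eq
      have hrD : star (r * D) * (r * D) = 0 := by
        rw [star_mul, hrsa, mul_assoc, ← mul_assoc r r D, hrr, ← mul_assoc]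
        exact hzero
      have hrD0 : r * D = 0 := (CStarRing.star_mul_self_eq_zero_iff _).mp hrD
      have hSD : S * D = 0 := by rw [← hrr, mul_assoc, hrD0, mul_zero]
      have hD0 : D = 0 := by
        calc D = iS * (S * D) := by rw [← mul_assoc, hiSS, one_mul]
          _ = 0 := by rw [hSD, mul_zero]
      have : C = iS * B := by rwa [hDdef, sub_eq_zero] at hD0
      exact this
    · intro hC
      have hD0 : D = 0 := by rw [hDdef, hC, sub_self]
      rw [key, hP, hD0, mul_zero, add_zero]
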